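/- If α is a totally real algebraic integer with α ∉ {−1, 0, 1}, then log h(α) ≥ (1/2)·log((1+√5)/2), where h denotes the absolute Weil height. -/

import Mathlib

open Polynomial

/-- The primitive integer polynomial associated to the minimal polynomial of `x` over `ℚ`. -/
noncomputable def intMinpoly (x : ℂ) : Polynomial ℤ :=
  IsLocalization.integerNormalization (nonZeroDivisors ℤ) (minpoly ℚ x)

/-- The (logarithmic) absolute Weil height of an algebraic number `x`, computed via the
Mahler measure of its integer minimal polynomial:
`log h(x) = (1/deg x) * (log |a₀| + Σ_{roots z} log max(1,|z|))`.
This agrees with `Σ_v log max(1,|x|_v)` for the standard normalized absolute values. -/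
noncomputable def logHeight (x : ℂ) : ℝ :=
  ((intMinpoly x).natDegree : ℝ)⁻¹ *
    (Real.log |((intMinpoly x).leadingCoeff : ℝ)| +
      (((intMinpoly x).aroots ℂ).map (fun z => Real.log (max 1 (‖z‖)))).sum)

/-- An algebraic number is totally real if all of its conjugates over `ℚ` are real. -/
def IsTotallyReal (x : ℂ) : Prop :=
  IsAlgebraic ℚ x ∧ ∀ z ∈ (minpoly ℚ x).aroots ℂ, z.im = 0

namespace SchinzelAux

noncomputable def s5 : ℝ := Real.sqrt 5
noncomputable def gold : ℝ := (1 + s5) / 2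
noncomputable def qq : ℝ := 1 / s5
noncomputable def pp : ℝ := 1 - qq

lemma s5_sq : s5 ^ 2 = 5 := Real.sq_sqrt (by norm_num)
lemma s5_gt : 2 < s5 := by
  have : Real.sqrt 4 < Real.sqrt 5 := Real.sqrt_lt_sqrt (by norm_num) (by norm_num)
  have h4 : Real.sqrt 4 = 2 := by
    rw [show (4:ℝ) = 2^2 by norm_num, Real.sqrt_sq (by norm_num)]
  rw [h4] at this; exact this
lemma s5_pos : 0 < s5 := by linarith [s5_gt]
lemma s5_ne : s5 ≠ 0 := ne_of_gt s5_pos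
lemma gold_gt_one : 1 < gold := by unfold gold; linarith [s5_gt]
lemma gold_pos : 0 < gold := by linarith [gold_gt_one]
lemma gold_ne : gold ≠ 0 := ne_of_gt gold_pos
lemma hg2 : gold ^ 2 = gold + 1 := by unfold gold; linear_combination s5_sq / 4
lemma h2g : 2 * gold - 1 ≠ 0 := by unfold gold; intro h; have := s5_gt; nlinarith
lemma hqe : qq = 1 / (2 * gold - 1) := by unfold qq gold; congr 1; ring
lemma qq_pos : 0 < qq := div_pos one_pos s5_pos
lemma qq_lt_one : qq < 1 := by
  rw [qq, div_lt_one s5_pos]; linarith [s5_gt]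
lemma pp_pos : 0 < pp := by unfold pp; linarith [qq_lt_one]
lemma pq_sum : pp + qq = 1 := by unfold pp; ring
lemma weight_sum : pp / 2 + qq + pp / 2 = 1 := by unfold pp; ring
lemma half_pp_add_qq_le_one : pp / 2 + qq ≤ 1 := by
  unfold pp; linarith [qq_pos, qq_lt_one]

lemma AM1 (t : ℝ) : pp / 2 * (t / gold ^ 2) + qq * ((t - 1) / gold) + pp / 2 * 1 = t / gold ^ 2 := by
  rw [pp, hqe]
  have h1 := gold_ne
  have h2 := h2g
  field_simp
  linear_combination (2*gold) * hg2

lemma AM2 (t : ℝ) : pp / 2 * (gold ^ 2 * t) + qq * (gold * (1 - t)) + pp / 2 * 1 = 1 := by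
  rw [pp, hqe]
  have h1 := gold_ne
  have h2 := h2g
  field_simp
  linear_combination (2*gold*t) * hg2

lemma loglem1 {t : ℝ} (ht : 1 < t) :
    Real.log gold + pp / 2 * Real.log t + qq * Real.log (t - 1) ≤ Real.log t := by
  have hgp := gold_pos
  have ha : (0:ℝ) < t / gold ^ 2 := by positivity
  have hb : (0:ℝ) < (t - 1) / gold := by
    apply div_pos (by linarith) hgp
  have amgm := Real.geom_mean_le_arith_mean3_weighted
    (le_of_lt (half_pos pp_pos)) (le_of_lt qq_pos) (le_of_lt (half_pos pp_pos))
    (le_of_lt ha) (le_of_lt hb) zero_le_one weight_sum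
  rw [Real.one_rpow, mul_one, AM1] at amgm
  have hlog := Real.log_le_log (by positivity) amgm
  rw [Real.log_mul (ne_of_gt (Real.rpow_pos_of_pos ha _)) (ne_of_gt (Real.rpow_pos_of_pos hb _)),
    Real.log_rpow ha, Real.log_rpow hb,
    Real.log_div (by positivity : (0:ℝ) < t).ne' (by positivity : (0:ℝ) < gold ^ 2).ne',
    Real.log_div (by linarith : (0:ℝ) < t - 1).ne' (ne_of_gt hgp),
    Real.log_pow] at hlog
  push_cast at hlog
  have hF : pp * Real.log gold + qq * Real.log gold = Real.log gold := by
    linear_combination Real.log gold * pq_sum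
  linarith [hlog, hF]

lemma loglem2 {t : ℝ} (h0 : 0 < t) (h1 : t < 1) :
    Real.log gold + pp / 2 * Real.log t + qq * Real.log (1 - t) ≤ 0 := by
  have hgp := gold_pos
  have ha : (0:ℝ) < gold ^ 2 * t := by positivity
  have hb : (0:ℝ) < gold * (1 - t) := by
    apply mul_pos hgp (by linarith)
  have amgm := Real.geom_mean_le_arith_mean3_weighted
    (le_of_lt (half_pos pp_pos)) (le_of_lt qq_pos) (le_of_lt (half_pos pp_pos))
    (le_of_lt ha) (le_of_lt hb) zero_le_one weight_sum
  rw [Real.one_rpow, mul_one, AM2] at amgm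
  have hlog := Real.log_le_log (by positivity) amgm
  rw [Real.log_mul (ne_of_gt (Real.rpow_pos_of_pos ha _)) (ne_of_gt (Real.rpow_pos_of_pos hb _)),
    Real.log_rpow ha, Real.log_rpow hb, Real.log_mul (by positivity) (ne_of_gt h0),
    Real.log_mul (ne_of_gt hgp) (by linarith : (0:ℝ) < 1 - t).ne', Real.log_pow, Real.log_one] at hlog
  push_cast at hlog
  have hF : pp * Real.log gold + qq * Real.log gold = Real.log gold := by
    linear_combination Real.log gold * pq_sum
  linarith [hlog, hF]

lemma keyx {x : ℝ} (h0 : x ≠ 0) (h1 : x ≠ 1) (hm : x ≠ -1) :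
    1/2 * Real.log gold + pp/2 * Real.log |x| + qq/2 * Real.log |x - 1| + qq/2 * Real.log |x + 1|
      ≤ Real.log (max 1 |x|) := by
  have hx1 : x - 1 ≠ 0 := sub_ne_zero.mpr h1
  have hxm : x + 1 ≠ 0 := by intro h; exact hm (by linarith)
  have ht0 : (0:ℝ) < x ^ 2 := by
    rw [← sq_abs]; exact pow_pos (abs_pos.mpr h0) 2
  have hL : Real.log (x ^ 2) = 2 * Real.log |x| := by
    rw [← sq_abs x, Real.log_pow]; push_cast; ring
  have habs : |x - 1| * |x + 1| = |x ^ 2 - 1| := by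
    rw [← abs_mul]; ring_nf
  have hlm : Real.log |x ^ 2 - 1| = Real.log |x - 1| + Real.log |x + 1| := by
    rw [← habs, Real.log_mul (abs_ne_zero.mpr hx1) (abs_ne_zero.mpr hxm)]
  rcases lt_trichotomy |x| 1 with hc | hc | hc
  · have ht1 : x ^ 2 < 1 := by
      nlinarith [sq_abs x, abs_nonneg x]
    have h2 := loglem2 ht0 ht1
    rw [hL] at h2
    have h1m : Real.log (1 - x ^ 2) = Real.log |x - 1| + Real.log |x + 1| := by
      rw [← hlm, abs_of_neg (by linarith : x ^ 2 - 1 < 0)]; ring_nf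
    rw [h1m] at h2
    rw [max_eq_left hc.le, Real.log_one]
    linarith
  · rcases (abs_eq (by norm_num : (0:ℝ) ≤ 1)).mp hc with h | h
    · exact absurd h h1
    · exact absurd h hm
  · have ht1 : 1 < x ^ 2 := by
      nlinarith [sq_abs x, abs_nonneg x]
    have h2 := loglem1 ht1
    rw [hL] at h2
    have h1m : Real.log (x ^ 2 - 1) = Real.log |x - 1| + Real.log |x + 1| := by
      rw [← hlm, abs_of_pos (by linarith : (0:ℝ) < x ^ 2 - 1)]
    rw [h1m] at h2
    rw [max_eq_right hc.le]
    linarith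

lemma keyz {z : ℂ} (him : z.im = 0) (h0 : z ≠ 0) (h1 : z ≠ 1) (hm : z ≠ -1) :
    1/2 * Real.log gold + pp/2 * Real.log (‖((0:ℂ) - z)‖)
      + qq/2 * Real.log (‖((1:ℂ) - z)‖) + qq/2 * Real.log (‖((-1:ℂ) - z)‖)
      ≤ Real.log (max 1 (‖z‖)) := by
  set x := z.re with hxdef
  have hz : (x : ℂ) = z := Complex.ext (Complex.ofReal_re _) (by rw [Complex.ofReal_im, him])
  have e0 : ‖((0:ℂ) - z)‖ = |x| := by
    rw [← hz]; rw [show (0:ℂ) - (x:ℂ) = ((-x : ℝ) : ℂ) by push_cast; ring]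
    rw [Complex.norm_real, Real.norm_eq_abs, abs_neg]
  have e1 : ‖((1:ℂ) - z)‖ = |x - 1| := by
    rw [← hz, show (1:ℂ) - (x:ℂ) = ((-(x-1) : ℝ) : ℂ) by push_cast; ring,
      Complex.norm_real, Real.norm_eq_abs, abs_neg]
  have em : ‖((-1:ℂ) - z)‖ = |x + 1| := by
    rw [← hz, show (-1:ℂ) - (x:ℂ) = ((-(x+1) : ℝ) : ℂ) by push_cast; ring,
      Complex.norm_real, Real.norm_eq_abs, abs_neg]
  have ez : ‖z‖ = |x| := by rw [← hz, Complex.norm_real, Real.norm_eq_abs]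
  rw [e0, e1, em, ez]
  apply keyx
  · intro h; apply h0; rw [← hz, h]; norm_num
  · intro h; apply h1; rw [← hz, h]; norm_num
  · intro h; apply hm; rw [← hz, h]; norm_num

lemma log_multiset_prod (s : Multiset ℝ) (h : ∀ x ∈ s, x ≠ 0) :
    Real.log s.prod = (s.map Real.log).sum := by
  induction s using Multiset.induction with
  | empty => simp
  | cons a s ih =>
    simp only [Multiset.prod_cons, Multiset.map_cons, Multiset.sum_cons]
    rw [Real.log_mul (h a (Multiset.mem_cons_self a s))
      (Multiset.prod_ne_zero (fun h0 => h 0 (Multiset.mem_cons_of_mem h0) rfl)),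
      ih (fun x hx => h x (Multiset.mem_cons_of_mem hx))]

lemma sum_map_aux (s : Multiset ℂ) (c a b e : ℝ) (F1 F2 F3 : ℂ → ℝ) :
    (s.map fun z => c + (a * F1 z + (b * F2 z + e * F3 z))).sum
      = (Multiset.card s : ℝ) * c
        + (a * (s.map F1).sum + (b * (s.map F2).sum + e * (s.map F3).sum)) := by
  induction s using Multiset.induction with
  | empty => simp
  | cons x s ih =>
    simp only [Multiset.map_cons, Multiset.sum_cons, Multiset.card_cons, ih]
    push_cast
    ring

end SchinzelAux

open SchinzelAux

/-- If `α` is a totally real algebraic integer with `α ∉ {-1,0,1}`, then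
`log h(α) ≥ (1/2)·log((1+√5)/2)`. -/
theorem stmt_0 (α : ℂ) (hint : IsIntegral ℤ α) (htr : IsTotallyReal α)
    (hne : α ∉ ({-1, 0, 1} : Set ℂ)) :
    logHeight α ≥ (1 / 2) * Real.log ((1 + Real.sqrt 5) / 2) := by
  simp only [Set.mem_insert_iff, Set.mem_singleton_iff, not_or] at hne
  obtain ⟨hnem, hne0, hne1⟩ := hne
  have hintQ : IsIntegral ℚ α := htr.1.isIntegral
  set Q := minpoly ℚ α with hQdef
  have hQmonic : Q.Monic := minpoly.monic hintQ
  have hQne : Q ≠ 0 := hQmonic.ne_zero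
  set P := intMinpoly α with hPdef
  obtain ⟨b, hb⟩ := IsLocalization.integerNormalization_map_to_map (nonZeroDivisors ℤ) Q
  have hbne : (b : ℤ) ≠ 0 := nonZeroDivisors.coe_ne_zero b
  have hPQ : P.map (algebraMap ℤ ℚ) = C ((b : ℤ) : ℚ) * Q := by
    rw [hPdef, intMinpoly, ← hQdef, hb, ← Int.cast_smul_eq_zsmul ℚ, Polynomial.smul_eq_C_mul]
  have hbQne : ((b : ℤ) : ℚ) ≠ 0 := Int.cast_ne_zero.mpr hbne
  have hPmapne : P.map (algebraMap ℤ ℚ) ≠ 0 := by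
    rw [hPQ]; exact mul_ne_zero (C_ne_zero.mpr hbQne) hQne
  have hPne : P ≠ 0 := fun h => hPmapne (by rw [h, Polynomial.map_zero])
  have hlcne : P.leadingCoeff ≠ 0 := leadingCoeff_ne_zero.mpr hPne
  have hcomp : (algebraMap ℚ ℂ).comp (algebraMap ℤ ℚ) = algebraMap ℤ ℂ :=
    Subsingleton.elim _ _
  set Pc := P.map (algebraMap ℤ ℂ) with hPcdef
  have hPC : Pc = C ((b : ℤ) : ℂ) * Q.map (algebraMap ℚ ℂ) := by
    rw [hPcdef, ← hcomp, ← Polynomial.map_map, hPQ, Polynomial.map_mul, Polynomial.map_C]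
    norm_num
  have hbCne : ((b : ℤ) : ℂ) ≠ 0 := Int.cast_ne_zero.mpr hbne
  -- roots agree with those of the minimal polynomial
  have hroots : P.aroots ℂ = Q.aroots ℂ := by
    rw [aroots_def, aroots_def, ← hPcdef, hPC, roots_C_mul _ hbCne]
  set R := P.aroots ℂ with hRdef
  -- all roots are real
  have hreal : ∀ z ∈ R, z.im = 0 := by
    intro z hz; exact htr.2 z (by rwa [← hroots])
  -- degree facts
  set d := P.natDegree with hddef
  have hinjQ : Function.Injective (algebraMap ℤ ℚ) := fun a b h => by simpa using h
  have hinjC : Function.Injective (algebraMap ℤ ℂ) := fun a b h => by simpa using h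
  have hdeg2 : Pc.natDegree = d := natDegree_map_eq_of_injective hinjC P
  have hdpos : 0 < d := by
    have h1 : (P.map (algebraMap ℤ ℚ)).natDegree = d :=
      natDegree_map_eq_of_injective hinjQ P
    have h2 : (C ((b : ℤ) : ℚ) * Q).natDegree = Q.natDegree := natDegree_C_mul hbQne
    rw [hPQ, h2] at h1
    rw [← h1]
    exact minpoly.natDegree_pos hintQ
  -- splitting and factorization
  have hsplits : Splits Pc := IsAlgClosed.splits Pc
  have hcard : Multiset.card R = d := by
    rw [hRdef, aroots_def, ← hPcdef, splits_iff_card_roots.mp hsplits, hdeg2]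
  have hlcPc : Pc.leadingCoeff = ((P.leadingCoeff : ℤ) : ℂ) := by
    rw [hPcdef]
    simpa using leadingCoeff_map_of_injective hinjC P
  have hfac : Pc = C ((P.leadingCoeff : ℤ) : ℂ) * (R.map fun r => X - C r).prod := by
    rw [← hlcPc]
    exact hsplits.eq_prod_roots
  -- evaluation formula
  have heval : ∀ m : ℂ, Pc.eval m
      = ((P.leadingCoeff : ℤ) : ℂ) * (R.map fun r => m - r).prod := by
    intro m
    rw [hfac, eval_mul, eval_C, eval_multiset_prod, Multiset.map_map]
    congr 2
    ext r
    simp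
  -- integer evaluation
  have hevalInt : ∀ m : ℤ, Pc.eval ((m : ℤ) : ℂ) = ((P.eval m : ℤ) : ℂ) := by
    intro m
    rw [hPcdef, Polynomial.eval_map]
    simpa using eval₂_at_apply (p := P) (algebraMap ℤ ℂ) m
  -- nonvanishing at -1, 0, 1
  have hQeval : ∀ m : ℚ, (m : ℂ) ≠ α → Q.eval m ≠ 0 := by
    intro m hmα h
    exact hmα (by simpa using minpoly.root hintQ h)
  have hPeval : ∀ m : ℤ, ((m : ℤ) : ℂ) ≠ α → P.eval m ≠ 0 := by
    intro m hmα h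
    have h2 : Q.eval ((m : ℤ) : ℚ) ≠ 0 := hQeval _ (by push_cast; push_cast at hmα; exact hmα)
    have hA : (P.map (algebraMap ℤ ℚ)).eval ((m : ℤ) : ℚ) = ((P.eval m : ℤ) : ℚ) := by
      rw [Polynomial.eval_map]
      simpa using eval₂_at_apply (p := P) (algebraMap ℤ ℚ) m
    have hB : (P.map (algebraMap ℤ ℚ)).eval ((m : ℤ) : ℚ) = ((b : ℤ) : ℚ) * Q.eval ((m : ℤ) : ℚ) := by
      rw [hPQ, eval_mul, eval_C]
    have hAB : ((b : ℤ) : ℚ) * Q.eval ((m : ℤ) : ℚ) = ((P.eval m : ℤ) : ℚ) := hB.symm.trans hA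
    rw [h] at hAB
    push_cast at hAB
    rcases mul_eq_zero.mp hAB with h' | h'
    exacts [hbQne (by exact_mod_cast h'), h2 h']
  -- leading coefficient bound
  set F := Real.log gold with hFdef
  set Lc := Real.log |((P.leadingCoeff : ℤ) : ℝ)| with hLcdef
  have habs_lead : (1:ℝ) ≤ |((P.leadingCoeff : ℤ) : ℝ)| := by
    exact_mod_cast Int.one_le_abs hlcne
  have hLc0 : 0 ≤ Lc := Real.log_nonneg habs_lead
  have hdne : ((d:ℕ) : ℝ) ≠ 0 := Nat.cast_ne_zero.mpr hdpos.ne'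
  -- roots are roots
  have hzroot : ∀ z ∈ R, Pc.eval z = 0 := by
    intro z hz
    rw [hRdef, aroots_def, ← hPcdef] at hz
    exact (Polynomial.mem_roots'.mp hz).2
  -- nonvanishing of Pc at integer points
  have hPcne : ∀ m : ℤ, ((m : ℤ) : ℂ) ≠ α → Pc.eval ((m : ℤ) : ℂ) ≠ 0 := by
    intro m hm
    rw [hevalInt m]
    exact_mod_cast hPeval m hm
  have hm0 : ((0 : ℤ) : ℂ) ≠ α := by push_cast; exact fun h => hne0 h.symm
  have hm1 : ((1 : ℤ) : ℂ) ≠ α := by push_cast; exact fun h => hne1 h.symm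
  have hmm : ((-1 : ℤ) : ℂ) ≠ α := by push_cast; exact fun h => hnem h.symm
  -- the sum-of-logs lower bound at an integer point
  have hsumlog : ∀ m : ℤ, ((m : ℤ) : ℂ) ≠ α →
      -Lc ≤ (R.map fun z => Real.log (‖(((m : ℤ) : ℂ) - z)‖)).sum := by
    intro m hm
    have hne' : Pc.eval ((m : ℤ) : ℂ) ≠ 0 := hPcne m hm
    have hev := heval ((m : ℤ) : ℂ)
    have hfactor : ∀ z ∈ R, ((m : ℤ) : ℂ) - z ≠ 0 := by
      intro z hz h0
      apply hne'
      rw [hev]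
      have : (0:ℂ) ∈ R.map fun z => ((m : ℤ) : ℂ) - z :=
        Multiset.mem_map.mpr ⟨z, hz, h0⟩
      rw [Multiset.prod_eq_zero this, mul_zero]
    have habsprod : ‖(Pc.eval ((m : ℤ) : ℂ))‖
        = ‖((P.leadingCoeff : ℤ) : ℂ)‖
          * (R.map fun z => ‖(((m : ℤ) : ℂ) - z)‖).prod := by
      rw [hev, norm_mul]
      congr 1
      exact (map_multiset_prod (normHom : ℂ →*₀ ℝ) _).trans (by rw [Multiset.map_map]; rfl)
    have h1le : (1:ℝ) ≤ ‖(Pc.eval ((m : ℤ) : ℂ))‖ := by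
      rw [hevalInt m, Complex.norm_intCast]
      exact_mod_cast Int.one_le_abs (hPeval m hm)
    have hlogge : 0 ≤ Real.log (‖(Pc.eval ((m : ℤ) : ℂ))‖) := Real.log_nonneg h1le
    have hAne : ‖((P.leadingCoeff : ℤ) : ℂ)‖ ≠ 0 := by
      rw [Complex.norm_intCast]; exact_mod_cast fun h => hlcne (by exact_mod_cast abs_eq_zero.mp (by exact_mod_cast h))
    have hprodne : (R.map fun z => ‖(((m : ℤ) : ℂ) - z)‖).prod ≠ 0 := by
      apply Multiset.prod_ne_zero
      intro h0
      obtain ⟨z, hz, hz0⟩ := Multiset.mem_map.mp h0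
      exact hfactor z hz (by simpa using norm_eq_zero.mp hz0)
    rw [habsprod, Real.log_mul hAne hprodne,
      log_multiset_prod _ (by
        intro x hx
        obtain ⟨z, hz, hzx⟩ := Multiset.mem_map.mp hx
        rw [← hzx]
        exact fun h => hfactor z hz (norm_eq_zero.mp h)),
      Multiset.map_map] at hlogge
    have hLA : Real.log (‖((P.leadingCoeff : ℤ) : ℂ)‖) = Lc := by
      rw [Complex.norm_intCast]
    have := hlogge
    rw [hLA] at this
    simp only [Function.comp_def] at this
    linarith
  have hsum0 := hsumlog 0 hm0
  have hsum1 := hsumlog 1 hm1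
  have hsumm := hsumlog (-1) hmm
  simp only [Int.cast_zero] at hsum0
  simp only [Int.cast_one] at hsum1
  simp only [Int.cast_neg, Int.cast_one] at hsumm
  -- pointwise key inequality
  have hptwise : ∀ z ∈ R,
      1/2 * F + (pp/2 * Real.log (‖((0:ℂ) - z)‖)
        + (qq/2 * Real.log (‖((1:ℂ) - z)‖)
          + qq/2 * Real.log (‖((-1:ℂ) - z)‖)))
      ≤ Real.log (max 1 (‖z‖)) := by
    intro z hz
    have hz0 : z ≠ 0 := by
      intro h; apply hPcne 0 hm0; rw [show (((0:ℤ)):ℂ) = z by rw [h]; norm_num]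
      exact hzroot z hz
    have hz1 : z ≠ 1 := by
      intro h; apply hPcne 1 hm1; rw [show (((1:ℤ)):ℂ) = z by rw [h]; norm_num]
      exact hzroot z hz
    have hzm : z ≠ -1 := by
      intro h; apply hPcne (-1) hmm; rw [show (((-1:ℤ)):ℂ) = z by rw [h]; norm_num]
      exact hzroot z hz
    have := keyz (hreal z hz) hz0 hz1 hzm
    linarith [this]
  have hS := Multiset.sum_map_le_sum_map _ _ hptwise
  rw [sum_map_aux R (1/2 * F) (pp/2) (qq/2) (qq/2)
    (fun z => Real.log (‖((0:ℂ) - z)‖))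
    (fun z => Real.log (‖((1:ℂ) - z)‖))
    (fun z => Real.log (‖((-1:ℂ) - z)‖))] at hS
  rw [hcard] at hS
  -- bound the three sums
  have hb0 : pp/2 * (-Lc) ≤ pp/2 * (R.map fun z => Real.log (‖((0:ℂ) - z)‖)).sum :=
    mul_le_mul_of_nonneg_left hsum0 (by linarith [pp_pos])
  have hb1 : qq/2 * (-Lc) ≤ qq/2 * (R.map fun z => Real.log (‖((1:ℂ) - z)‖)).sum :=
    mul_le_mul_of_nonneg_left hsum1 (by linarith [qq_pos])
  have hbm : qq/2 * (-Lc) ≤ qq/2 * (R.map fun z => Real.log (‖((-1:ℂ) - z)‖)).sum :=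
    mul_le_mul_of_nonneg_left hsumm (by linarith [qq_pos])
  have hcoef : 0 ≤ (1 - pp/2 - qq) * Lc :=
    mul_nonneg (by linarith [half_pp_add_qq_le_one]) hLc0
  set S := (R.map fun z => Real.log (max 1 (‖z‖))).sum with hSdef
  have hfinal : (d:ℝ)/2 * F ≤ Lc + S := by nlinarith [hS, hb0, hb1, hbm, hcoef]
  -- conclude
  have hgold : gold = (1 + Real.sqrt 5) / 2 := rfl
  rw [ge_iff_le, show (1:ℝ)/2 * Real.log ((1 + Real.sqrt 5)/2) = 1/2 * F by rw [hFdef, hgold]]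
  have hrw : logHeight α = ((d:ℕ):ℝ)⁻¹ * (Lc + S) := rfl
  rw [hrw]
  have h1 : ((d:ℕ):ℝ)⁻¹ * ((d:ℝ)/2 * F) ≤ ((d:ℕ):ℝ)⁻¹ * (Lc + S) :=
    mul_le_mul_of_nonneg_left hfinal (inv_nonneg.mpr (Nat.cast_nonneg d))
  calc 1/2 * F = ((d:ℕ):ℝ)⁻¹ * ((d:ℝ)/2 * F) := by
        field_simp
        try ring
    _ ≤ ((d:ℕ):ℝ)⁻¹ * (Lc + S) := h1
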